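/- Let F be a field, A ∈ F^n⊗F^m a tensor, and let U ⊆ F^n⊗F^m be a subspace spanned by linearly independent pure tensors u_1⊗v_1,…,u_s⊗v_s. For 1 ≤ i ≤ s define t_i ∈ (F^2)^{⊗s} to be the pure tensor e_1⊗…⊗e_1⊗e_2⊗e_1⊗…⊗e_1 with e_2 in the i-th position, and define t_{s+1} = e_1⊗e_1⊗…⊗e_1 ∈ (F^2)^{⊗s}. Define the tensor à = u_1⊗v_1⊗t_1 + … + u_s⊗v_s⊗t_s + A⊗t_{s+1} ∈ F^n⊗F^m⊗(F^2)^{⊗s}. Then rank(Ã) = s + rank(A,U), where rank(A,U) = min{rank(B) : B ∈ A+U} and rank denotes tensor rank (here à is regarded as a tensor of order s+2, i.e., rank with respect to pure tensors in F^n⊗F^m⊗F^2⊗…⊗F^2). -/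

import Mathlib

open TensorProduct

set_option maxHeartbeats 1000000
set_option synthInstance.maxHeartbeats 200000

/-- The tensor rank of a second-order tensor `T ∈ Fⁿ ⊗ Fᵐ`: the smallest number of
pure tensors `x ⊗ y` summing to `T`. -/
noncomputable def tensorRank2 {F : Type*} [Field F] {n m : ℕ}
    (T : (Fin n → F) ⊗[F] (Fin m → F)) : ℕ :=
  sInf {r : ℕ | ∃ (x : Fin r → Fin n → F) (y : Fin r → Fin m → F),
    T = ∑ i : Fin r, x i ⊗ₜ[F] y i}

/-- `rank(A, U) = min { rank B | B ∈ A + U }`. -/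
noncomputable def rankAU {F : Type*} [Field F] {n m : ℕ}
    (A : (Fin n → F) ⊗[F] (Fin m → F))
    (U : Submodule F ((Fin n → F) ⊗[F] (Fin m → F))) : ℕ :=
  sInf {r : ℕ | ∃ u ∈ U, tensorRank2 (A + u) = r}

/-- The tensor rank of an element of `Fⁿ ⊗ Fᵐ ⊗ (F²)^{⊗ s}`, regarded as a tensor of
order `s + 2`: the smallest number of pure tensors `x ⊗ y ⊗ w₁ ⊗ ⋯ ⊗ w_s` summing to it. -/
noncomputable def tensorRankOrderS2 {F : Type*} [Field F] {n m s : ℕ}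
    (T : ((Fin n → F) ⊗[F] (Fin m → F)) ⊗[F]
      PiTensorProduct F (fun _ : Fin s => Fin 2 → F)) : ℕ :=
  sInf {r : ℕ | ∃ (x : Fin r → Fin n → F) (y : Fin r → Fin m → F)
      (w : Fin r → Fin s → Fin 2 → F),
    T = ∑ j : Fin r, (x j ⊗ₜ[F] y j) ⊗ₜ[F] PiTensorProduct.tprod F (w j)}

noncomputable section TildeAux
namespace TildeAux

open PiTensorProduct

variable {F : Type*} [Field F] {n m s : ℕ}

local notation "WW" => (Fin n → F) ⊗[F] (Fin m → F)
local notation "PP" => PiTensorProduct F (fun _ : Fin s => Fin 2 → F)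

/-- basic existence of a finite decomposition for 2-tensors -/
lemma exists_fin_decomp2 (T : WW) :
    ∃ (r : ℕ) (x : Fin r → Fin n → F) (y : Fin r → Fin m → F),
      T = ∑ i : Fin r, x i ⊗ₜ[F] y i := by
  induction T using TensorProduct.induction_on with
  | zero => exact ⟨0, Fin.elim0, Fin.elim0, by simp⟩
  | tmul a b => exact ⟨1, fun _ => a, fun _ => b, by simp⟩
  | add T₁ T₂ h₁ h₂ =>
    obtain ⟨r₁, x₁, y₁, h₁⟩ := h₁
    obtain ⟨r₂, x₂, y₂, h₂⟩ := h₂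
    refine ⟨r₁ + r₂, Fin.addCases x₁ x₂, Fin.addCases y₁ y₂, ?_⟩
    rw [Fin.sum_univ_add]
    simp [h₁, h₂]

lemma tensorRank2_spec (T : WW) :
    ∃ (x : Fin (tensorRank2 T) → Fin n → F) (y : Fin (tensorRank2 T) → Fin m → F),
      T = ∑ i, x i ⊗ₜ[F] y i := by
  have hne : {r : ℕ | ∃ (x : Fin r → Fin n → F) (y : Fin r → Fin m → F),
      T = ∑ i : Fin r, x i ⊗ₜ[F] y i}.Nonempty := by
    obtain ⟨r, x, y, h⟩ := exists_fin_decomp2 T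
    exact ⟨r, x, y, h⟩
  exact Nat.sInf_mem hne

lemma tensorRank2_le_card (T : WW) (J : Finset ℕ) (x : ℕ → Fin n → F)
    (y : ℕ → Fin m → F) (h : T = ∑ j ∈ J, x j ⊗ₜ[F] y j) :
    tensorRank2 T ≤ J.card := by
  apply Nat.sInf_le
  refine ⟨fun i => x ((J.equivFin.symm i) : _), fun i => y ((J.equivFin.symm i) : _), ?_⟩
  rw [h, ← Finset.sum_coe_sort J (fun j => x j ⊗ₜ[F] y j),
    ← Equiv.sum_comp J.equivFin.symm (fun j : J => x (j : ℕ) ⊗ₜ[F] y (j : ℕ))]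

lemma rankAU_le {A : WW} {U : Submodule F WW} {z : WW} (hz : z ∈ U) :
    rankAU A U ≤ tensorRank2 (A + z) :=
  Nat.sInf_le ⟨z, hz, rfl⟩

lemma rankAU_spec (A : WW) (U : Submodule F WW) :
    ∃ z ∈ U, tensorRank2 (A + z) = rankAU A U := by
  have hne : {r : ℕ | ∃ u ∈ U, tensorRank2 (A + u) = r}.Nonempty :=
    ⟨tensorRank2 A, 0, U.zero_mem, by simp⟩
  exact Nat.sInf_mem hne

lemma tensorRankOrderS2_le_card
    (T : WW ⊗[F] PP) (J : Finset ℕ) (x : ℕ → Fin n → F)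
    (y : ℕ → Fin m → F) (w : ℕ → Fin s → Fin 2 → F)
    (h : T = ∑ j ∈ J, (x j ⊗ₜ[F] y j) ⊗ₜ[F] PiTensorProduct.tprod F (w j)) :
    tensorRankOrderS2 T ≤ J.card := by
  apply Nat.sInf_le
  refine ⟨fun i => x ((J.equivFin.symm i) : _), fun i => y ((J.equivFin.symm i) : _),
    fun i => w ((J.equivFin.symm i) : _), ?_⟩
  rw [h, ← Finset.sum_coe_sort J
      (fun j => (x j ⊗ₜ[F] y j) ⊗ₜ[F] PiTensorProduct.tprod F (w j)),
    ← Equiv.sum_comp J.equivFin.symm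
      (fun j : J => (x (j:ℕ) ⊗ₜ[F] y (j:ℕ)) ⊗ₜ[F] PiTensorProduct.tprod F (w (j:ℕ)))]

/-- `t_i` -/
def tk (i : Fin s) : PP :=
  PiTensorProduct.tprod F
    (fun j : Fin s => if j = i then (Pi.single 1 1 : Fin 2 → F) else Pi.single 0 1)

/-- `t_{s+1}` -/
def tL : PP :=
  PiTensorProduct.tprod F (fun _ : Fin s => (Pi.single 0 1 : Fin 2 → F))

/-- the coordinate functional on `(F²)^{⊗s}` for a pattern `p`. -/
def coordFn (p : Fin s → Fin 2) : PP →ₗ[F] F :=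
  PiTensorProduct.lift
    ((MultilinearMap.mkPiAlgebra F (Fin s) F).compLinearMap
      (fun k => LinearMap.proj (p k)))

@[simp] lemma coordFn_tprod (p : Fin s → Fin 2) (w : Fin s → Fin 2 → F) :
    coordFn p (PiTensorProduct.tprod F w) = ∏ k, w k (p k) := by
  simp [coordFn]

/-- contraction of the second factor with a functional -/
def contract (μ : PP →ₗ[F] F) : (WW ⊗[F] PP) →ₗ[F] WW :=
  TensorProduct.lift (((LinearMap.lsmul F WW).comp μ).flip)

@[simp] lemma contract_tmul (μ : PP →ₗ[F] F) (a : WW) (t : PP) :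
    contract μ (a ⊗ₜ[F] t) = μ t • a := by
  simp [contract]

/-- the rank-one substitution map on `F²` -/
def gmap (c : F) : (Fin 2 → F) →ₗ[F] (Fin 2 → F) :=
  LinearMap.smulRight
    ((LinearMap.proj 0 : (Fin 2 → F) →ₗ[F] F) + c • LinearMap.proj 1)
    (Pi.single 0 1)

@[simp] lemma gmap_apply (c : F) (x : Fin 2 → F) :
    gmap c x = (x 0 + c * x 1) • (Pi.single 0 1 : Fin 2 → F) := by
  simp [gmap, LinearMap.smulRight_apply]

/-- substitution map on the big tensor product, acting on factor `i`. -/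
def subst (i : Fin s) (c : F) : (WW ⊗[F] PP) →ₗ[F] (WW ⊗[F] PP) :=
  LinearMap.lTensor WW
    (PiTensorProduct.map
      (Function.update (fun _ : Fin s => (LinearMap.id : (Fin 2 → F) →ₗ[F] (Fin 2 → F))) i (gmap c)))

lemma subst_tmul_tprod (i : Fin s) (c : F) (a : WW) (w : Fin s → Fin 2 → F) :
    subst i c (a ⊗ₜ[F] PiTensorProduct.tprod F w)
      = ((w i 0 + c * w i 1) • a) ⊗ₜ[F]
          PiTensorProduct.tprod F (Function.update w i (Pi.single 0 1)) := by
  classical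
  rw [subst, LinearMap.lTensor_tmul, PiTensorProduct.map_tprod]
  have h1 : (fun j => (Function.update
        (fun _ : Fin s => (LinearMap.id : (Fin 2 → F) →ₗ[F] (Fin 2 → F))) i (gmap c)) j (w j))
      = Function.update w i ((w i 0 + c * w i 1) • (Pi.single 0 1 : Fin 2 → F)) := by
    funext j
    by_cases hj : j = i
    · subst hj; simp
    · simp [Function.update_apply, hj]
  rw [h1, MultilinearMap.map_update_smul, TensorProduct.tmul_smul, TensorProduct.smul_tmul']

@[simp] lemma coordFn_pi_tk_self (i : Fin s) :
    coordFn (fun k => if k = i then 1 else 0) (tk i : PP) = 1 := by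
  rw [tk, coordFn_tprod]
  apply Finset.prod_eq_one
  intro j _
  by_cases hj : j = i <;> simp [hj, Pi.single_apply]

lemma coordFn_pi_tk_ne {i k : Fin s} (h : k ≠ i) :
    coordFn (fun k' => if k' = i then 1 else 0) (tk k : PP) = 0 := by
  rw [tk, coordFn_tprod]
  apply Finset.prod_eq_zero (Finset.mem_univ i)
  simp [Ne.symm h, Pi.single_apply]

@[simp] lemma coordFn_pi_tL (i : Fin s) :
    coordFn (fun k => if k = i then 1 else 0) (tL : PP) = 0 := by
  rw [tL, coordFn_tprod]
  apply Finset.prod_eq_zero (Finset.mem_univ i)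
  simp [Pi.single_apply]

@[simp] lemma coordFn_zero_tL :
    coordFn (fun _ => 0) (tL : PP) = 1 := by
  rw [tL, coordFn_tprod]
  apply Finset.prod_eq_one
  intro j _
  simp [Pi.single_apply]

lemma subst_tmul_tk_ne {i k : Fin s} (h : k ≠ i) (c : F) (a : WW) :
    subst i c (a ⊗ₜ[F] (tk k : PP)) = a ⊗ₜ[F] (tk k : PP) := by
  rw [tk, subst_tmul_tprod]
  have h0 : (if i = k then (Pi.single 1 1 : Fin 2 → F) else Pi.single 0 1) = Pi.single 0 1 := by
    simp [Ne.symm h]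
  rw [h0]
  have h1 : Function.update
      (fun j : Fin s => if j = k then (Pi.single 1 1 : Fin 2 → F) else Pi.single 0 1) i
      (Pi.single 0 1)
      = fun j : Fin s => if j = k then (Pi.single 1 1 : Fin 2 → F) else Pi.single 0 1 := by
    funext j
    rcases eq_or_ne j i with rfl | hj
    · simp [Ne.symm h]
    · simp [Function.update_apply, hj]
  rw [h1]
  simp [Pi.single_apply]

lemma subst_tmul_tk_self (i : Fin s) (c : F) (a : WW) :
    subst i c (a ⊗ₜ[F] (tk i : PP)) = (c • a) ⊗ₜ[F] (tL : PP) := by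
  rw [tk, subst_tmul_tprod]
  have h1 : Function.update
      (fun j : Fin s => if j = i then (Pi.single 1 1 : Fin 2 → F) else Pi.single 0 1) i
      (Pi.single 0 1)
      = fun _ : Fin s => (Pi.single 0 1 : Fin 2 → F) := by
    funext j
    rcases eq_or_ne j i with rfl | hj
    · simp
    · simp [Function.update_apply, hj]
  rw [h1, ← tL]
  simp [Pi.single_apply]

lemma subst_tmul_tL (i : Fin s) (c : F) (a : WW) :
    subst i c (a ⊗ₜ[F] (tL : PP)) = a ⊗ₜ[F] (tL : PP) := by
  rw [tL, subst_tmul_tprod]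
  have h1 : Function.update (fun _ : Fin s => (Pi.single 0 1 : Fin 2 → F)) i (Pi.single 0 1)
      = fun _ : Fin s => (Pi.single 0 1 : Fin 2 → F) :=
    Function.update_eq_self i _
  rw [h1]
  simp [Pi.single_apply]

lemma lower_aux (u : Fin s → Fin n → F) (v : Fin s → Fin m → F)
    (I : Finset (Fin s)) :
    ∀ (A : WW) (J : Finset ℕ) (x : ℕ → Fin n → F) (y : ℕ → Fin m → F)
      (w : ℕ → Fin s → Fin 2 → F),
      (∀ k ∈ I, u k ⊗ₜ[F] v k ≠ (0 : WW)) →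
      ((∑ k ∈ I, (u k ⊗ₜ[F] v k) ⊗ₜ[F] (tk k : PP)) + A ⊗ₜ[F] (tL : PP)
        = ∑ j ∈ J, (x j ⊗ₜ[F] y j) ⊗ₜ[F] PiTensorProduct.tprod F (w j)) →
      I.card + rankAU A (Submodule.span F ((fun k => u k ⊗ₜ[F] v k) '' I)) ≤ J.card := by
  classical
  induction I using Finset.strongInductionOn with
  | _ I IH =>
  intro A J x y w h0 hT
  rcases I.eq_empty_or_nonempty with rfl | ⟨i, hi⟩
  · -- base case : I = ∅
    simp only [Finset.sum_empty, zero_add, Finset.card_empty] at hT ⊢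
    have hA : A = ∑ j ∈ J, ((∏ k, w j k 0) • x j) ⊗ₜ[F] y j := by
      have hc := congrArg (contract (coordFn (fun _ => 0))) hT
      simp only [map_sum, contract_tmul, coordFn_zero_tL, one_smul, coordFn_tprod] at hc
      rw [hc]
      exact Finset.sum_congr rfl fun j _ => TensorProduct.smul_tmul' _ _ _
    calc rankAU A _ ≤ tensorRank2 (A + 0) := rankAU_le (Submodule.zero_mem _)
      _ ≤ J.card := by rw [add_zero]; exact tensorRank2_le_card A J _ y hA
  · -- inductive step
    -- find a decomposition term with nonzero second coordinate in factor i
    have hc := congrArg (contract (coordFn (fun k' => if k' = i then 1 else 0))) hT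
    simp only [map_add, map_sum, contract_tmul, coordFn_tprod, coordFn_pi_tL,
      zero_smul, add_zero] at hc
    rw [Finset.sum_eq_single_of_mem i hi (fun k _ hk => by
        rw [coordFn_pi_tk_ne hk, zero_smul]), coordFn_pi_tk_self, one_smul] at hc
    obtain ⟨j₀, hj₀, hj0ne⟩ := Finset.exists_ne_zero_of_sum_ne_zero
      (s := J) (by rw [← hc]; exact h0 i hi)
    have hprod : (∏ k, w j₀ k (if k = i then 1 else 0)) ≠ 0 :=
      fun h => hj0ne (by rw [h, zero_smul])
    have hw1 : w j₀ i 1 ≠ 0 := by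
      intro h
      exact hprod (Finset.prod_eq_zero (Finset.mem_univ i) (by simp [h]))
    set c : F := -(w j₀ i 0) / (w j₀ i 1) with hc_def
    have hα : w j₀ i 0 + c * w j₀ i 1 = 0 := by
      rw [hc_def]; field_simp; ring
    -- substitute
    have hT' : (∑ k ∈ I.erase i, (u k ⊗ₜ[F] v k) ⊗ₜ[F] (tk k : PP))
        + (A + c • (u i ⊗ₜ[F] v i)) ⊗ₜ[F] (tL : PP)
        = ∑ j ∈ J.erase j₀,
            (((w j i 0 + c * w j i 1) • x j) ⊗ₜ[F] y j) ⊗ₜ[F]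
              PiTensorProduct.tprod F (Function.update (w j) i (Pi.single 0 1)) := by
      have hs := congrArg (subst i c) hT
      rw [map_add, map_sum, map_sum, ← Finset.add_sum_erase I _ hi,
        subst_tmul_tk_self, subst_tmul_tL,
        Finset.sum_congr rfl (fun k hk => subst_tmul_tk_ne (Finset.ne_of_mem_erase hk) c _),
        Finset.sum_congr rfl (fun j (_ : j ∈ J) => subst_tmul_tprod i c _ (w j)),
        ← Finset.add_sum_erase J _ hj₀, hα, zero_smul, TensorProduct.zero_tmul, zero_add] at hs
      rw [TensorProduct.add_tmul,
        Finset.sum_congr rfl (fun j (_ : j ∈ J.erase j₀) =>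
          (congrArg (· ⊗ₜ[F] PiTensorProduct.tprod F (Function.update (w j) i (Pi.single 0 1)))
            (TensorProduct.smul_tmul' (w j i 0 + c * w j i 1) (x j) (y j))).symm),
        ← hs]
      abel
    have h1 := IH (I.erase i) (Finset.erase_ssubset hi) (A + c • (u i ⊗ₜ[F] v i))
      (J.erase j₀) (fun j => (w j i 0 + c * w j i 1) • x j) y
      (fun j => Function.update (w j) i (Pi.single 0 1))
      (fun k hk => h0 k (Finset.mem_of_mem_erase hk)) hT'
    -- compare the two rank quantities
    obtain ⟨z, hz, hrz⟩ := rankAU_spec (A + c • (u i ⊗ₜ[F] v i))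
      (Submodule.span F ((fun k => u k ⊗ₜ[F] v k) '' (I.erase i)))
    have hmem : c • (u i ⊗ₜ[F] v i) + z
        ∈ Submodule.span F ((fun k => u k ⊗ₜ[F] v k) '' I) := by
      refine Submodule.add_mem _
        (Submodule.smul_mem _ _ (Submodule.subset_span ⟨i, hi, rfl⟩)) ?_
      exact Submodule.span_mono
        (Set.image_mono (by exact_mod_cast Finset.erase_subset i I)) hz
    have h2 : rankAU A (Submodule.span F ((fun k => u k ⊗ₜ[F] v k) '' I))
        ≤ rankAU (A + c • (u i ⊗ₜ[F] v i))
            (Submodule.span F ((fun k => u k ⊗ₜ[F] v k) '' (I.erase i))) := by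
      rw [← hrz, add_assoc]
      exact rankAU_le hmem
    have hcI : (I.erase i).card + 1 = I.card := Finset.card_erase_add_one hi
    have hcJ : (J.erase j₀).card + 1 = J.card := Finset.card_erase_add_one hj₀
    omega

lemma tL_def : (tL : PP) = PiTensorProduct.tprod F (fun _ : Fin s => (Pi.single 0 1 : Fin 2 → F)) := rfl

lemma upper_mem (A : WW) (u : Fin s → Fin n → F) (v : Fin s → Fin m → F) :
    (s + rankAU A (Submodule.span F (Set.range fun k : Fin s => u k ⊗ₜ[F] v k)))
      ∈ {R : ℕ | ∃ (x : Fin R → Fin n → F) (y : Fin R → Fin m → F)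
          (w : Fin R → Fin s → Fin 2 → F),
        ((∑ k : Fin s, (u k ⊗ₜ[F] v k) ⊗ₜ[F] (tk k : PP)) + A ⊗ₜ[F] (tL : PP))
          = ∑ j, (x j ⊗ₜ[F] y j) ⊗ₜ[F] PiTensorProduct.tprod F (w j)} := by
  classical
  obtain ⟨z, hz, hrz⟩ := rankAU_spec A
    (Submodule.span F (Set.range fun k : Fin s => u k ⊗ₜ[F] v k))
  obtain ⟨c, hcz⟩ := (Submodule.mem_span_range_iff_exists_fun F).mp hz
  obtain ⟨x, y, hxy⟩ := tensorRank2_spec (A + z)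
  rw [← hrz]
  refine ⟨Fin.addCases u x, Fin.addCases v y,
    Fin.addCases
      (fun k => fun j : Fin s =>
        if j = k then ((Pi.single 1 1 : Fin 2 → F) - c k • (Pi.single 0 1 : Fin 2 → F))
        else Pi.single 0 1)
      (fun _ => fun _ : Fin s => (Pi.single 0 1 : Fin 2 → F)), ?_⟩
  rw [Fin.sum_univ_add]
  simp only [Fin.addCases_left, Fin.addCases_right]
  have htk : ∀ k : Fin s,
      PiTensorProduct.tprod F (fun j : Fin s =>
        if j = k then ((Pi.single 1 1 : Fin 2 → F) - c k • (Pi.single 0 1 : Fin 2 → F))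
        else Pi.single 0 1)
      = (tk k : PP) - c k • tL := by
    intro k
    have hupd : ∀ (zz : Fin 2 → F), (fun j : Fin s => if j = k then zz else Pi.single 0 1)
        = Function.update (fun _ : Fin s => (Pi.single 0 1 : Fin 2 → F)) k zz := by
      intro zz; funext j; simp [Function.update_apply]
    rw [hupd ((Pi.single 1 1 : Fin 2 → F) - c k • (Pi.single 0 1 : Fin 2 → F)),
      MultilinearMap.map_update_sub, MultilinearMap.map_update_smul, ← hupd,
      Function.update_eq_self]
    rfl
  have hterm : ∀ k : Fin s,
      (u k ⊗ₜ[F] v k) ⊗ₜ[F] (PiTensorProduct.tprod F (fun j : Fin s =>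
        if j = k then ((Pi.single 1 1 : Fin 2 → F) - c k • (Pi.single 0 1 : Fin 2 → F))
        else Pi.single 0 1))
      = (u k ⊗ₜ[F] v k) ⊗ₜ[F] (tk k : PP)
          + ((-(c k)) • (u k ⊗ₜ[F] v k)) ⊗ₜ[F] (tL : PP) := by
    intro k
    rw [htk k, TensorProduct.tmul_sub, TensorProduct.tmul_smul, TensorProduct.smul_tmul',
      sub_eq_add_neg, ← TensorProduct.neg_tmul, ← neg_smul]
  have h2 : ∑ j, (x j ⊗ₜ[F] y j) ⊗ₜ[F]
        (PiTensorProduct.tprod F (fun _ : Fin s => (Pi.single 0 1 : Fin 2 → F)))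
      = (A + z) ⊗ₜ[F] (tL : PP) := by
    rw [← tL_def, ← TensorProduct.sum_tmul, ← hxy]
  have hz2 : ∑ k : Fin s, (-(c k)) • (u k ⊗ₜ[F] v k) = -z := by
    rw [← hcz, ← Finset.sum_neg_distrib]
    exact Finset.sum_congr rfl fun k _ =>
      neg_smul (c k) (u k ⊗ₜ[F] v k)
  rw [Finset.sum_congr rfl fun k _ => hterm k, h2, Finset.sum_add_distrib,
    ← TensorProduct.sum_tmul, hz2, add_assoc, ← TensorProduct.add_tmul,
    show -z + (A + z) = A by abel]

lemma main_aux (A : WW) (u : Fin s → Fin n → F) (v : Fin s → Fin m → F)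
    (h0 : ∀ k : Fin s, u k ⊗ₜ[F] v k ≠ (0 : WW)) :
    tensorRankOrderS2 ((∑ k : Fin s, (u k ⊗ₜ[F] v k) ⊗ₜ[F] (tk k : PP)) + A ⊗ₜ[F] (tL : PP))
      = s + rankAU A (Submodule.span F (Set.range fun k : Fin s => u k ⊗ₜ[F] v k)) := by
  classical
  refine le_antisymm (Nat.sInf_le (upper_mem A u v)) ?_
  have hmem := Nat.sInf_mem (⟨_, upper_mem A u v⟩ : Set.Nonempty _)
  obtain ⟨x, y, w, hxyw⟩ := hmem
  set R := tensorRankOrderS2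
    ((∑ k : Fin s, (u k ⊗ₜ[F] v k) ⊗ₜ[F] (tk k : PP)) + A ⊗ₜ[F] (tL : PP)) with hR
  set X : ℕ → Fin n → F := fun j => if h : j < R then x ⟨j, h⟩ else 0 with hX
  set Y : ℕ → Fin m → F := fun j => if h : j < R then y ⟨j, h⟩ else 0 with hY
  set Wf : ℕ → Fin s → Fin 2 → F := fun j => if h : j < R then w ⟨j, h⟩ else 0 with hW
  have hdec : (∑ k ∈ Finset.univ, (u k ⊗ₜ[F] v k) ⊗ₜ[F] (tk k : PP)) + A ⊗ₜ[F] (tL : PP)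
      = ∑ j ∈ Finset.range R,
          (X j ⊗ₜ[F] Y j) ⊗ₜ[F] PiTensorProduct.tprod F (Wf j) := by
    rw [← Fin.sum_univ_eq_sum_range
      (fun j => (X j ⊗ₜ[F] Y j) ⊗ₜ[F] PiTensorProduct.tprod F (Wf j)) R, hxyw]
    refine Finset.sum_congr rfl fun i _ => ?_
    simp only [hX, hY, hW, dif_pos (show (i : ℕ) < R from i.is_lt), Fin.eta] <;> rfl
  have hlow := lower_aux u v Finset.univ A (Finset.range R) X Y Wf
    (fun k _ => h0 k) hdec
  rw [Finset.coe_univ, Set.image_univ, Finset.card_univ, Fintype.card_fin,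
    Finset.card_range] at hlow
  exact hlow

end TildeAux
end TildeAux

/-- with `tᵢ = e₁ ⊗ ⋯ ⊗ e₂ ⊗ ⋯ ⊗ e₁` (with `e₂` in the `i`-th spot) and
`t_{s+1} = e₁ ⊗ ⋯ ⊗ e₁` in `(F²)^{⊗ s}`, the tensor
`Ã = ∑ₖ uₖ ⊗ vₖ ⊗ tₖ + A ⊗ t_{s+1}` satisfies `rank(Ã) = s + rank(A,U)`. -/
theorem tensorRank_tilde_eq {F : Type*} [Field F] {n m s : ℕ}
    (A : (Fin n → F) ⊗[F] (Fin m → F))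
    (u : Fin s → Fin n → F) (v : Fin s → Fin m → F)
    (hli : LinearIndependent F fun k : Fin s => u k ⊗ₜ[F] v k)
    (U : Submodule F ((Fin n → F) ⊗[F] (Fin m → F)))
    (hU : U = Submodule.span F (Set.range fun k : Fin s => u k ⊗ₜ[F] v k))
    (t : Fin s → PiTensorProduct F (fun _ : Fin s => Fin 2 → F))
    (ht : ∀ i : Fin s, t i = PiTensorProduct.tprod F
      (fun j : Fin s => if j = i then (Pi.single 1 1 : Fin 2 → F) else Pi.single 0 1))
    (tLast : PiTensorProduct F (fun _ : Fin s => Fin 2 → F))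
    (htLast : tLast = PiTensorProduct.tprod F
      (fun _ : Fin s => (Pi.single 0 1 : Fin 2 → F))) :
    tensorRankOrderS2
        ((∑ k : Fin s, (u k ⊗ₜ[F] v k) ⊗ₜ[F] t k) + A ⊗ₜ[F] tLast)
      = s + rankAU A U := by
  classical
  subst hU
  subst htLast
  have h0 : ∀ k : Fin s, u k ⊗ₜ[F] v k ≠ 0 := fun k => hli.ne_zero k
  have hts : (∑ k : Fin s, (u k ⊗ₜ[F] v k) ⊗ₜ[F] t k)
      = ∑ k : Fin s, (u k ⊗ₜ[F] v k) ⊗ₜ[F] (TildeAux.tk k) :=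
    Finset.sum_congr rfl fun k _ => by rw [ht k]; rfl
  rw [hts]
  exact TildeAux.main_aux A u v h0
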